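/- Let f : ℂⁿ → ℝ be a C² plurisubharmonic function that is 2π-periodic in each imaginary direction, and suppose the fiberwise average F(x) := (2π)^{-n} ∫_{[0,2π]^n} f(x + iy) dy is identically zero on ℝⁿ. Then f is harmonic with respect to each complex coordinate z_i separately (i.e. ∂²f/∂x_i² + ∂²f/∂y_i² = 0 for each i); in particular f is harmonic on ℂⁿ. -/

import Mathlib

set_option maxHeartbeats 1000000

open MeasureTheory Set

noncomputable def boxx (n : ℕ) : Set (Fin n → ℝ) :=
  Set.univ.pi fun _ : Fin n => Set.Icc (0 : ℝ) (2 * Real.pi)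

lemma line_hasDerivAt {n : ℕ} {g : (Fin n → ℂ) → ℝ} (hg : ContDiff ℝ 1 g)
    (p v : Fin n → ℂ) (t : ℝ) :
    HasDerivAt (fun t : ℝ => g (p + t • v)) ((fderiv ℝ g (p + t • v)) v) t := by
  have h1 : HasDerivAt (fun t : ℝ => p + t • v) v t := by
    simpa using ((hasDerivAt_id t).smul_const v).const_add p
  exact ((hg.differentiable one_ne_zero) _).hasFDerivAt.comp_hasDerivAt t h1

lemma hasDerivAt_box_integral {n : ℕ} {g : (Fin n → ℂ) → ℝ} (hg : ContDiff ℝ 1 g)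
    (c : (Fin n → ℝ) → (Fin n → ℂ)) (hc : Continuous c) (v : Fin n → ℂ) (t₀ : ℝ) :
    HasDerivAt (fun t : ℝ => ∫ y in boxx n, g (c y + t • v))
      (∫ y in boxx n, (fderiv ℝ g (c y + t₀ • v)) v) t₀ := by
  have hKc : IsCompact ((fun p : ℝ × (Fin n → ℝ) => c p.2 + p.1 • v) ''
      (Icc (t₀ - 1) (t₀ + 1) ×ˢ boxx n)) :=
    (isCompact_Icc.prod (isCompact_univ_pi fun _ => isCompact_Icc)).image
      ((hc.comp continuous_snd).add (continuous_fst.smul continuous_const))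
  obtain ⟨C, hC⟩ := hKc.exists_bound_of_continuousOn
    ((((hg.continuous_fderiv one_ne_zero).clm_apply continuous_const)).continuousOn)
  have key := hasDerivAt_integral_of_dominated_loc_of_deriv_le (F := fun t y => g (c y + t • v))
    (F' := fun t y => (fderiv ℝ g (c y + t • v)) v) (x₀ := t₀)
    (bound := fun _ => C) (μ := volume.restrict (boxx n)) (s := Metric.ball t₀ 1) (Metric.ball_mem_nhds t₀ one_pos)
    (Filter.Eventually.of_forall fun t =>
      ((hg.continuous.comp (show Continuous fun y => c y + t • v from
        hc.add continuous_const)).comp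
        (continuous_id)).aestronglyMeasurable)
    ?_ ?_ ?_ ?_ ?_
  · exact key.2
  · exact (hg.continuous.comp (show Continuous fun y => c y + t₀ • v from hc.add
      continuous_const)).continuousOn.integrableOn_compact
        (isCompact_univ_pi fun _ => isCompact_Icc)
  · exact (((hg.continuous_fderiv one_ne_zero).comp (show Continuous fun y => c y + t₀ • v from hc.add
      continuous_const)).clm_apply continuous_const).aestronglyMeasurable
  · filter_upwards [ae_restrict_mem (MeasurableSet.univ_pi fun _ => measurableSet_Icc)]
      with y hy t ht
    refine hC _ ⟨(t, y), ⟨?_, hy⟩, rfl⟩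
    have := Metric.mem_ball.mp ht
    rw [Real.dist_eq] at this
    constructor <;> [linarith [neg_abs_le (t - t₀)]; linarith [le_abs_self (t - t₀)]]
  · exact integrableOn_const
      ((isCompact_univ_pi fun _ : Fin n => isCompact_Icc).measure_lt_top.ne)
  · filter_upwards with y t _
    exact line_hasDerivAt hg (c y) v t

lemma deriv2_box_integral_zero {n : ℕ} {f : (Fin n → ℂ) → ℝ} (hC2 : ContDiff ℝ 2 f)
    {c : (Fin n → ℝ) → (Fin n → ℂ)} (hc : Continuous c) (v : Fin n → ℂ)
    (h0 : ∀ t : ℝ, (∫ y in boxx n, f (c y + t • v)) = 0) :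
    (∫ y in boxx n, (fderiv ℝ (fderiv ℝ f) (c y)) v v) = 0 := by
  have h1 : ∀ t₀ : ℝ, (∫ y in boxx n, (fderiv ℝ f (c y + t₀ • v)) v) = 0 := by
    intro t₀
    have h := hasDerivAt_box_integral (hC2.of_le one_le_two) c hc v t₀
    have h' : HasDerivAt (fun _ : ℝ => (0 : ℝ))
        (∫ y in boxx n, (fderiv ℝ f (c y + t₀ • v)) v) t₀ := by
      simpa only [h0] using h
    exact (h'.unique (hasDerivAt_const t₀ 0))
  set G : (Fin n → ℂ) → ℝ := fun z => (fderiv ℝ f z) v with hG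
  have hGc : ContDiff ℝ 1 G := (hC2.fderiv_right le_rfl).clm_apply contDiff_const
  have h2 := hasDerivAt_box_integral hGc c hc v 0
  have h2' : HasDerivAt (fun _ : ℝ => (0 : ℝ))
      (∫ y in boxx n, (fderiv ℝ G (c y + (0:ℝ) • v)) v) 0 := by
    simpa only [hG, h1] using h2
  have h3 : (∫ y in boxx n, (fderiv ℝ G (c y + (0:ℝ) • v)) v) = 0 :=
    h2'.unique (hasDerivAt_const 0 0)
  have h4 : ∀ z : Fin n → ℂ, (fderiv ℝ G z) v = (fderiv ℝ (fderiv ℝ f) z) v v := by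
    intro z
    have hd : DifferentiableAt ℝ (fderiv ℝ f) z :=
      ((hC2.fderiv_right (m := 1) le_rfl).differentiable one_ne_zero) z
    rw [hG, fderiv_clm_apply hd (differentiableAt_const v)]
    simp
  simp only [zero_smul, add_zero, h4] at h3
  exact h3

lemma insertNth_add_single {m : ℕ} (i : Fin (m + 1)) (a b : ℝ) (z : Fin m → ℝ) :
    (i.insertNth (a + b) z : Fin (m + 1) → ℝ)
      = (i.insertNth a z : Fin (m + 1) → ℝ) + Pi.single i b := by
  funext j
  rcases eq_or_ne j i with rfl | hj
  · simp
  · obtain ⟨k, rfl⟩ := Fin.exists_succAbove_eq hj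
    simp [Pi.single_eq_of_ne (Fin.succAbove_ne i k)]

lemma box_integral_translate {m : ℕ} {h : (Fin (m + 1) → ℝ) → ℝ} (hh : Continuous h)
    (i : Fin (m + 1)) (hper : ∀ y, h (y + Pi.single i (2 * Real.pi)) = h y) (t : ℝ) :
    (∫ y in boxx (m + 1), h (y + Pi.single i t)) = ∫ y in boxx (m + 1), h y := by
  have twopi_pos : (0 : ℝ) < 2 * Real.pi := by positivity
  set e := MeasurableEquiv.piFinSuccAbove (fun _ : Fin (m + 1) => ℝ) i with he
  have hmp : MeasurePreserving e volume volume :=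
    volume_preserving_piFinSuccAbove (fun _ : Fin (m + 1) => ℝ) i
  have hpre : ∀ s : ℝ,
      (∫ y in boxx (m + 1), h (y + Pi.single i s)) =
        ∫ a in Icc (0:ℝ) (2 * Real.pi), (∫ z in boxx m,
          h ((i.insertNth (a + s) z : Fin (m + 1) → ℝ))) := by
    intro s
    have hsymm : MeasurePreserving e.symm volume volume := hmp.symm
    have hsymm_ap : ∀ p : ℝ × (Fin m → ℝ),
        e.symm p = (i.insertNth p.1 p.2 : Fin (m + 1) → ℝ) := by
      rintro ⟨a, z⟩
      simp [he, MeasurableEquiv.piFinSuccAbove_symm_apply, Fin.insertNthEquiv]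
    have him : e.symm ⁻¹' (boxx (m + 1)) = Icc (0:ℝ) (2 * Real.pi) ×ˢ boxx m := by
      ext ⟨a, z⟩
      simp only [mem_preimage, boxx, mem_pi, mem_univ, forall_true_left, mem_prod,
        hsymm_ap (a, z), mem_Icc]
      rw [i.forall_iff_succAbove]
      simp [mem_Icc]
    have hkey := hsymm.setIntegral_preimage_emb e.symm.measurableEmbedding
      (fun y => h (y + Pi.single i s)) (boxx (m + 1))
    rw [← hkey, him]
    have h1 : Continuous (fun p : ℝ × (Fin m → ℝ) =>
        (i.insertNth p.1 p.2 : Fin (m + 1) → ℝ)) :=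
      Continuous.finInsertNth (A := fun _ : Fin (m+1) => ℝ) i continuous_fst continuous_snd
    have hcont : Continuous (fun p : ℝ × (Fin m → ℝ) =>
        h ((i.insertNth p.1 p.2 : Fin (m + 1) → ℝ) + Pi.single i s)) :=
      hh.comp (h1.add continuous_const)
    have hint : IntegrableOn
        (fun p : ℝ × (Fin m → ℝ) =>
          h ((i.insertNth p.1 p.2 : Fin (m + 1) → ℝ) + Pi.single i s))
        (Icc (0:ℝ) (2 * Real.pi) ×ˢ boxx m) volume :=
      hcont.continuousOn.integrableOn_compact
        (isCompact_Icc.prod (isCompact_univ_pi fun _ => isCompact_Icc))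
    have hint' : IntegrableOn
        (fun p : ℝ × (Fin m → ℝ) =>
          h ((i.insertNth p.1 p.2 : Fin (m + 1) → ℝ) + Pi.single i s))
        (Icc (0:ℝ) (2 * Real.pi) ×ˢ boxx m)
        ((volume : Measure ℝ).prod (volume : Measure (Fin m → ℝ))) := by
      rw [← MeasureTheory.Measure.volume_eq_prod]; exact hint
    have hprod : (∫ p in Icc (0:ℝ) (2 * Real.pi) ×ˢ boxx m,
          h ((i.insertNth p.1 p.2 : Fin (m + 1) → ℝ) + Pi.single i s)
          ∂((volume : Measure ℝ).prod (volume : Measure (Fin m → ℝ)))) =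
        ∫ a in Icc (0:ℝ) (2 * Real.pi), (∫ z in boxx m,
          h ((i.insertNth a z : Fin (m + 1) → ℝ) + Pi.single i s)) :=
      MeasureTheory.setIntegral_prod _ hint'
    · rw [MeasureTheory.Measure.volume_eq_prod]
      simp only [hsymm_ap]
      rw [hprod]
      congr 1
      funext a
      congr 1
      funext z
      rw [← insertNth_add_single]
  rw [show (fun y : Fin (m+1) → ℝ => h y)
      = fun y : Fin (m+1) → ℝ => h (y + Pi.single i (0:ℝ)) by simp]
  rw [hpre t, hpre 0]
  set Φ : ℝ → ℝ := fun a => ∫ z in boxx m, h ((i.insertNth a z : Fin (m + 1) → ℝ)) with hΦ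
  have hΦper : Function.Periodic Φ (2 * Real.pi) := by
    intro a
    simp only [hΦ]
    congr 1
    funext z
    rw [insertNth_add_single, hper]
  have key : ∀ s : ℝ, (∫ a in Icc (0:ℝ) (2 * Real.pi), Φ (a + s)) =
      ∫ a in Icc (0:ℝ) (2 * Real.pi), Φ (a + 0) := by
    intro s
    rw [MeasureTheory.integral_Icc_eq_integral_Ioc, MeasureTheory.integral_Icc_eq_integral_Ioc,
      ← intervalIntegral.integral_of_le twopi_pos.le, ← intervalIntegral.integral_of_le
        twopi_pos.le, intervalIntegral.integral_comp_add_right,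
        intervalIntegral.integral_comp_add_right]
    have := hΦper.intervalIntegral_add_eq s 0
    simpa [add_comm] using this
  exact key t

lemma zero_on_box {n : ℕ} {G : (Fin n → ℝ) → ℝ} (hGc : Continuous G) (hG0 : ∀ y, 0 ≤ G y)
    (hint : (∫ y in boxx n, G y) = 0) : ∀ y ∈ boxx n, G y = 0 := by
  intro y₀ hy₀
  by_contra hne
  have hpos : 0 < G y₀ := lt_of_le_of_ne (hG0 y₀) (Ne.symm hne)
  have h1 : 0 < ∫ y in boxx n, G y := by
    refine (setIntegral_pos_iff_support_of_nonneg_ae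
      (Filter.Eventually.of_forall fun y => hG0 y)
      (hGc.continuousOn.integrableOn_compact (isCompact_univ_pi fun _ => isCompact_Icc))).mpr ?_
    have hU : IsOpen (G ⁻¹' Ioi 0) := isOpen_Ioi.preimage hGc
    have hclos : y₀ ∈ closure (interior (boxx n)) := by
      have : interior (boxx n) = Set.univ.pi fun _ : Fin n => Ioo (0:ℝ) (2 * Real.pi) := by
        rw [boxx, interior_pi_set finite_univ]
        simp [interior_Icc]
      rw [this, closure_pi_set]
      simp only [closure_Ioo (by positivity : (0:ℝ) ≠ 2 * Real.pi)]
      exact hy₀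
    have hne2 : ((G ⁻¹' Ioi 0) ∩ interior (boxx n)).Nonempty := by
      rcases mem_closure_iff.mp hclos _ hU hpos with ⟨w, hw1, hw2⟩
      exact ⟨w, hw1, hw2⟩
    have hop : IsOpen ((G ⁻¹' Ioi 0) ∩ interior (boxx n)) := hU.inter isOpen_interior
    have hsub : (G ⁻¹' Ioi 0) ∩ interior (boxx n) ⊆ Function.support G ∩ boxx n := by
      rintro w ⟨hw1, hw2⟩
      exact ⟨ne_of_gt hw1, interior_subset hw2⟩
    exact lt_of_lt_of_le (hop.measure_pos volume hne2) (measure_mono hsub)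
  rw [hint] at h1
  exact lt_irrefl 0 h1

lemma invariant_lattice {n : ℕ} {G : (Fin n → ℂ) → ℝ}
    (hGper : ∀ (z : Fin n → ℂ) (j : Fin n),
      G (z + Pi.single j ((2 * Real.pi : ℂ) * Complex.I)) = G z)
    (K : Fin n → ℤ) (z : Fin n → ℂ) :
    G (z + ∑ j, Pi.single j ((((K j : ℝ) * (2 * Real.pi) : ℝ) : ℂ) * Complex.I)) = G z := by
  have hint : ∀ (k : ℤ) (j : Fin n) (w : Fin n → ℂ),
      G (w + Pi.single j ((((k : ℝ) * (2 * Real.pi) : ℝ) : ℂ) * Complex.I)) = G w := by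
    intro k
    induction k using Int.induction_on with
    | zero => intro j w; simp
    | succ k ih =>
        intro j w
        push_cast
        push_cast at ih ⊢
        rw [show ((k : ℂ) + 1) * (2 * Real.pi) * Complex.I
            = (k : ℂ) * (2 * Real.pi) * Complex.I + (2 * Real.pi : ℂ) * Complex.I by ring]
        rw [Pi.single_add, ← add_assoc, hGper, ih]
    | pred k ih =>
        intro j w
        push_cast at ih ⊢
        have h2 := hGper (w + Pi.single j ((-(k:ℂ) - 1) * (2 * Real.pi) * Complex.I)) j
        rw [add_assoc, ← Pi.single_add, show (-(k:ℂ) - 1) * (2 * Real.pi) * Complex.I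
            + 2 * (Real.pi:ℂ) * Complex.I = -(k:ℂ) * (2 * Real.pi) * Complex.I by ring] at h2
        rw [← h2]
        exact ih j w
  have : ∀ s : Finset (Fin n), ∀ w : Fin n → ℂ,
      G (w + ∑ j ∈ s, Pi.single j ((((K j : ℝ) * (2 * Real.pi) : ℝ) : ℂ) * Complex.I)) = G w := by
    intro s
    induction s using Finset.induction_on with
    | empty => intro w; simp
    | insert j s hj ih =>
        intro w
        rw [Finset.sum_insert hj, ← add_assoc]
        rw [ih]
        exact hint _ _ _
  exact this Finset.univ z

open MeasureTheory

/-- The Levi form of a real-valued `C²` function `f` on `ℂⁿ` at the point `p`,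
evaluated on the vector `v`: for `f` real-valued this equals
`∑_{j,k} (∂²f/∂z_j∂z̄_k)(p) v_j conj(v_k)`, expressed via the real second
derivative as `(1/4)(D²f(v,v) + D²f(i•v, i•v))`. -/
noncomputable def leviForm (n : ℕ) (f : (Fin n → ℂ) → ℝ) (p v : Fin n → ℂ) : ℝ :=
  (1 / 4) * (iteratedFDeriv ℝ 2 f p ![v, v] +
    iteratedFDeriv ℝ 2 f p ![Complex.I • v, Complex.I • v])

/-- A `C²` function on `ℂⁿ` is plurisubharmonic if its Levi form is positive
semidefinite at every point. -/
def Plurisubharmonic (n : ℕ) (f : (Fin n → ℂ) → ℝ) : Prop :=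
  ∀ p v : Fin n → ℂ, 0 ≤ leviForm n f p v

/-- The Laplacian of `f` with respect to the `i`-th complex coordinate at `p`:
`(∂²f/∂x_i² + ∂²f/∂y_i²)(p)`, expressed via the real second derivative in the
directions `e_i` and `i•e_i`. -/
noncomputable def coordLaplacian (n : ℕ) (f : (Fin n → ℂ) → ℝ) (i : Fin n)
    (p : Fin n → ℂ) : ℝ :=
  iteratedFDeriv ℝ 2 f p
      ![(Pi.single i (1 : ℂ) : Fin n → ℂ), (Pi.single i (1 : ℂ) : Fin n → ℂ)] +
    iteratedFDeriv ℝ 2 f p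
      ![Complex.I • (Pi.single i (1 : ℂ) : Fin n → ℂ),
        Complex.I • (Pi.single i (1 : ℂ) : Fin n → ℂ)]

/-- If a periodic `C²` PSH function on `ℂⁿ` has identically vanishing fiberwise
average, then it is harmonic in each complex coordinate separately; in particular
it is harmonic on `ℂⁿ`. -/
theorem separately_harmonic_of_average_zero (n : ℕ) (f : (Fin n → ℂ) → ℝ)
    (hC2 : ContDiff ℝ 2 f)
    (hPSH : Plurisubharmonic n f)
    (hper : ∀ (z : Fin n → ℂ) (j : Fin n),
      f (z + Pi.single j ((2 * Real.pi : ℂ) * Complex.I)) = f z)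
    (havg : ∀ x : Fin n → ℝ,
      ((2 * Real.pi) ^ n)⁻¹ *
        (∫ y in Set.univ.pi fun _ : Fin n => Set.Icc (0 : ℝ) (2 * Real.pi),
          f fun j => (x j : ℂ) + (y j : ℂ) * Complex.I) = 0) :
    (∀ (i : Fin n) (p : Fin n → ℂ), coordLaplacian n f i p = 0) ∧
      ∀ p : Fin n → ℂ, ∑ i : Fin n, coordLaplacian n f i p = 0 := by
  have hiter : ∀ (p v w : Fin n → ℂ), iteratedFDeriv ℝ 2 f p ![v, w]
      = fderiv ℝ (fderiv ℝ f) p v w := by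
    intro p v w; rw [iteratedFDeriv_two_apply]; simp
  have hdf : Differentiable ℝ f := hC2.differentiable two_ne_zero
  have hdf2 : Differentiable ℝ (fderiv ℝ f) := (hC2.fderiv_right (m := 1) le_rfl).differentiable one_ne_zero
  have hcont2 : Continuous (fderiv ℝ (fderiv ℝ f)) :=
    (hC2.fderiv_right (m := 1) le_rfl).continuous_fderiv one_ne_zero
  have hcl : ∀ (i : Fin n) (p : Fin n → ℂ), coordLaplacian n f i p
      = fderiv ℝ (fderiv ℝ f) p (Pi.single i (1:ℂ) : Fin n → ℂ) (Pi.single i (1:ℂ) : Fin n → ℂ)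
        + fderiv ℝ (fderiv ℝ f) p (Complex.I • (Pi.single i (1:ℂ) : Fin n → ℂ))
            (Complex.I • (Pi.single i (1:ℂ) : Fin n → ℂ)) := by
    intro i p; unfold coordLaplacian; rw [hiter, hiter]
  -- shift invariance of the second derivative
  have hshift : ∀ (c : Fin n → ℂ), (∀ z, f (z + c) = f z) →
      ∀ z, fderiv ℝ (fderiv ℝ f) (z + c) = fderiv ℝ (fderiv ℝ f) z := by
    intro c hc
    have key : ∀ {X : Type} [NormedAddCommGroup X] [NormedSpace ℝ X]
        (g : (Fin n → ℂ) → X), Differentiable ℝ g → (∀ z, g (z + c) = g z) →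
        ∀ z, fderiv ℝ g (z + c) = fderiv ℝ g z := by
      intro X _ _ g hg hgper z
      have h1 : HasFDerivAt (fun w => g (w + c)) (fderiv ℝ g (z + c)) z :=
        (hg (z + c)).hasFDerivAt.comp z ((hasFDerivAt_id z).add_const c)
      rw [show (fun w => g (w + c)) = g from funext hgper] at h1
      exact h1.unique (hg z).hasFDerivAt
    exact key (fderiv ℝ f) hdf2 (fun z => key f hdf hc z)
  have hnonneg : ∀ (i : Fin n) (z : Fin n → ℂ), 0 ≤ coordLaplacian n f i z := by
    intro i z
    have h := hPSH z (Pi.single i 1)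
    unfold leviForm at h
    unfold coordLaplacian
    linarith
  have key : ∀ (i : Fin n) (p : Fin n → ℂ), coordLaplacian n f i p = 0 := by
    intro i p
    obtain ⟨m, rfl⟩ : ∃ m, n = m + 1 := ⟨n - 1, by have := i.pos; omega⟩
    set x : Fin (m+1) → ℝ := fun j => (p j).re with hx
    set e : Fin (m+1) → ℂ := Pi.single i 1 with hee
    set cxy : (Fin (m+1) → ℝ) → (Fin (m+1) → ℂ) :=
      fun y => fun j => (x j : ℂ) + (y j : ℂ) * Complex.I with hcxy
    have hcxyc : Continuous cxy := continuous_pi fun j =>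
      continuous_const.add ((Complex.continuous_ofReal.comp (continuous_apply j)).mul
        continuous_const)
    have hbase : ∀ x' : Fin (m+1) → ℝ,
        (∫ y in boxx (m+1), f (fun j => (x' j : ℂ) + (y j : ℂ) * Complex.I)) = 0 := by
      intro x'
      have h := havg x'
      have hne : ((2 * Real.pi) ^ (m+1) : ℝ)⁻¹ ≠ 0 :=
        inv_ne_zero (pow_ne_zero _ (by positivity))
      exact (mul_eq_zero.mp h).resolve_left hne
    -- x-direction
    have h0x : ∀ t : ℝ, (∫ y in boxx (m+1), f (cxy y + t • e)) = 0 := by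
      intro t
      have hre : ∀ y : Fin (m+1) → ℝ, cxy y + t • e
          = fun j => (((x + t • (Pi.single i (1:ℝ) : Fin (m+1) → ℝ)) j : ℝ) : ℂ)
              + (y j : ℂ) * Complex.I := by
        intro y; funext j
        rcases eq_or_ne j i with rfl | hj
        · simp [hcxy, hee]
          push_cast
          ring
        · simp [hcxy, hee, Pi.single_eq_of_ne hj]
      simp only [hre]
      exact hbase _
    have hDxx := deriv2_box_integral_zero hC2 hcxyc e h0x
    -- y-direction
    have h0y : ∀ t : ℝ, (∫ y in boxx (m+1), f (cxy y + t • (Complex.I • e))) = 0 := by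
      intro t
      have hre : ∀ y : Fin (m+1) → ℝ, cxy y + t • (Complex.I • e)
          = cxy (y + Pi.single i t) := by
        intro y; funext j
        rcases eq_or_ne j i with rfl | hj
        · simp [hcxy, hee]
          push_cast
          ring
        · simp [hcxy, hee, Pi.single_eq_of_ne hj]
      simp only [hre]
      have hper' : ∀ y, (fun y => f (cxy y)) (y + Pi.single i (2 * Real.pi))
          = (fun y => f (cxy y)) y := by
        intro y
        simp only []
        have : cxy (y + Pi.single i (2 * Real.pi))
            = cxy y + Pi.single i ((2 * Real.pi : ℂ) * Complex.I) := by
          funext j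
          rcases eq_or_ne j i with rfl | hj
          · simp [hcxy]
            push_cast
            ring
          · simp [hcxy, Pi.single_eq_of_ne hj]
        rw [this, hper]
      have := box_integral_translate (h := fun y => f (cxy y))
        (hC2.continuous.comp hcxyc) i hper' t
      rw [this]
      exact hbase x
    have hDyy := deriv2_box_integral_zero hC2 hcxyc (Complex.I • e) h0y
    -- combine
    have hintA : IntegrableOn
        (fun y => fderiv ℝ (fderiv ℝ f) (cxy y) e e) (boxx (m+1)) volume :=
      ((((hcont2.comp hcxyc).clm_apply continuous_const).clm_apply
        continuous_const)).continuousOn.integrableOn_compact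
          (isCompact_univ_pi fun _ => isCompact_Icc)
    have hintB : IntegrableOn
        (fun y => fderiv ℝ (fderiv ℝ f) (cxy y) (Complex.I • e) (Complex.I • e))
        (boxx (m+1)) volume :=
      ((((hcont2.comp hcxyc).clm_apply continuous_const).clm_apply
        continuous_const)).continuousOn.integrableOn_compact
          (isCompact_univ_pi fun _ => isCompact_Icc)
    have hg0 : (∫ y in boxx (m+1), coordLaplacian (m+1) f i (cxy y)) = 0 := by
      have : (fun y => coordLaplacian (m+1) f i (cxy y))
          = fun y => fderiv ℝ (fderiv ℝ f) (cxy y) e e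
            + fderiv ℝ (fderiv ℝ f) (cxy y) (Complex.I • e) (Complex.I • e) := by
        funext y; rw [hcl]
      rw [this, integral_add hintA hintB, hDxx, hDyy, add_zero]
    have hzero := zero_on_box (G := fun y => coordLaplacian (m+1) f i (cxy y))
      (by
        have : (fun y => coordLaplacian (m+1) f i (cxy y))
            = fun y => fderiv ℝ (fderiv ℝ f) (cxy y) e e
              + fderiv ℝ (fderiv ℝ f) (cxy y) (Complex.I • e) (Complex.I • e) := by
          funext y; rw [hcl]
        rw [this]
        exact (((hcont2.comp hcxyc).clm_apply continuous_const).clm_apply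
          continuous_const).add (((hcont2.comp hcxyc).clm_apply continuous_const).clm_apply
          continuous_const))
      (fun y => hnonneg i (cxy y)) hg0
    -- reduce the point p to the box
    have hperA : ∀ (z : Fin (m+1) → ℂ) (j : Fin (m+1)),
        coordLaplacian (m+1) f i (z + Pi.single j ((2 * Real.pi : ℂ) * Complex.I))
          = coordLaplacian (m+1) f i z := by
      intro z j
      rw [hcl, hcl, hshift (Pi.single j ((2 * Real.pi : ℂ) * Complex.I)) (fun w => hper w j) z]
    set K : Fin (m+1) → ℤ := fun j => ⌊(p j).im / (2 * Real.pi)⌋ with hK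
    set y₀ : Fin (m+1) → ℝ := fun j => (p j).im - (K j) * (2 * Real.pi) with hy₀
    have twopi_pos : (0:ℝ) < 2 * Real.pi := by positivity
    have hy₀box : y₀ ∈ boxx (m+1) := by
      intro j _
      constructor
      · exact Int.sub_floor_div_mul_nonneg ((p j).im) twopi_pos
      · exact (Int.sub_floor_div_mul_lt ((p j).im) twopi_pos).le
    have hdecomp : p = cxy y₀
        + ∑ j, Pi.single j ((((K j : ℝ) * (2 * Real.pi) : ℝ) : ℂ) * Complex.I) := by
      funext l
      rw [show (∑ j, Pi.single j ((((K j : ℝ) * (2 * Real.pi) : ℝ) : ℂ) * Complex.I))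
          = fun j => (((K j : ℝ) * (2 * Real.pi) : ℝ) : ℂ) * Complex.I from
        Finset.univ_sum_single _]
      simp only [Pi.add_apply, hcxy, hy₀, hx]
      apply Complex.ext <;> push_cast <;> simp <;> ring
    have := invariant_lattice hperA K (cxy y₀)
    rw [← hdecomp] at this
    rw [this]  -- wrong direction? this : G p = G (cxy y₀)
    exact hzero y₀ hy₀box
  exact ⟨key, fun p => Finset.sum_eq_zero fun i _ => key i p⟩
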